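/- Let n ≥ 4, let V be an n-dimensional real vector space with a nondegenerate symmetric bilinear form g, and let B be a generalized curvature tensor on V such that (Ric(B))² is not a linear combination of g and Ric(B). If Weyl(B) = (φ/2)·Ric(B)∧Ric(B) + α₁·g∧(Ric(B))² + α₂·g∧Ric(B) + (α₃/2)·g∧g for some real numbers φ, α₁, α₂, α₃, then α₁ = φ/(n−2), α₂ = −κ(B)·φ/(n−2), and α₃ = ((κ(B))² − tr_g((Ric(B))²))·φ/((n−2)(n−1)). -/

import Mathlib

namespace OVAff

variable {V : Type*} [AddCommGroup V] [Module ℝ V]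

/-- Kulkarni–Nomizu product of two (0,2)-tensors. -/
noncomputable def KN (E F : V → V → ℝ) : V → V → V → V → ℝ := fun X₁ X₂ X₃ X₄ =>
  E X₁ X₄ * F X₂ X₃ + E X₂ X₃ * F X₁ X₄ - E X₁ X₃ * F X₂ X₄ - E X₂ X₄ * F X₁ X₃

/-- Kulkarni–Nomizu product of a (0,2)-tensor with a (0,4)-tensor. -/
noncomputable def KN4 (E : V → V → ℝ) (T : V → V → V → V → ℝ) :
    V → V → V → V → V → V → ℝ := fun X₁ X₂ X₃ X₄ Y₁ Y₂ =>
  E X₁ X₄ * T X₂ X₃ Y₁ Y₂ + E X₂ X₃ * T X₁ X₄ Y₁ Y₂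
    - E X₁ X₃ * T X₂ X₄ Y₁ Y₂ - E X₂ X₄ * T X₁ X₃ Y₁ Y₂

/-- (X ∧_A Y) Z = A(Y,Z) X − A(X,Z) Y. -/
noncomputable def wedgeVec (A : V → V → ℝ) (X Y Z : V) : V := A Y Z • X - A X Z • Y

/-- Tachibana operator Q(A,T) on a (0,2)-tensor T. -/
noncomputable def Q2 (A T : V → V → ℝ) : V → V → V → V → ℝ :=
  fun X₁ X₂ X Y => -(T (wedgeVec A X Y X₁) X₂ + T X₁ (wedgeVec A X Y X₂))

/-- Tachibana operator Q(A,T) on a (0,4)-tensor T. -/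
noncomputable def Q4 (A : V → V → ℝ) (T : V → V → V → V → ℝ) :
    V → V → V → V → V → V → ℝ := fun X₁ X₂ X₃ X₄ X Y =>
  -(T (wedgeVec A X Y X₁) X₂ X₃ X₄ + T X₁ (wedgeVec A X Y X₂) X₃ X₄
    + T X₁ X₂ (wedgeVec A X Y X₃) X₄ + T X₁ X₂ X₃ (wedgeVec A X Y X₄))

/-- The derivation B·T of a curvature operator family ℬ (with h(ℬ(X,Y)Z,W)=B(X,Y,Z,W))
acting on a (0,2)-tensor T. -/
noncomputable def dot2 (ℬ : V → V → V → V) (T : V → V → ℝ) : V → V → V → V → ℝ :=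
  fun X₁ X₂ X Y => -(T (ℬ X Y X₁) X₂ + T X₁ (ℬ X Y X₂))

/-- The derivation B·T acting on a (0,4)-tensor T. -/
noncomputable def dot4 (ℬ : V → V → V → V) (T : V → V → V → V → ℝ) :
    V → V → V → V → V → V → ℝ := fun X₁ X₂ X₃ X₄ X Y =>
  -(T (ℬ X Y X₁) X₂ X₃ X₄ + T X₁ (ℬ X Y X₂) X₃ X₄
    + T X₁ X₂ (ℬ X Y X₃) X₄ + T X₁ X₂ X₃ (ℬ X Y X₄))

/-- Ricci contraction of a (0,4)-tensor with respect to an h-orthonormal basis `e`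
with signs `ε`. -/
noncomputable def ricci {n : ℕ} (ε : Fin n → ℝ) (e : Fin n → V)
    (B : V → V → V → V → ℝ) : V → V → ℝ :=
  fun X Y => ∑ j, ε j * B (e j) X Y (e j)

/-- Scalar curvature of a (0,4)-tensor. -/
noncomputable def scal {n : ℕ} (ε : Fin n → ℝ) (e : Fin n → V)
    (B : V → V → V → V → ℝ) : ℝ :=
  ∑ j, ε j * ricci ε e B (e j) (e j)

/-- Weyl tensor of a (0,4)-tensor with respect to the metric h. -/
noncomputable def weyl {n : ℕ} (h : V → V → ℝ) (ε : Fin n → ℝ) (e : Fin n → V)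
    (B : V → V → V → V → ℝ) : V → V → V → V → ℝ := fun X₁ X₂ X₃ X₄ =>
  B X₁ X₂ X₃ X₄ - (1 / ((n : ℝ) - 2)) * KN h (ricci ε e B) X₁ X₂ X₃ X₄
    + (scal ε e B / (2 * ((n : ℝ) - 2) * ((n : ℝ) - 1))) * KN h h X₁ X₂ X₃ X₄


/-- coefficients of a Weyl-tensor decomposition are determined when
(Ric(B))² is not a combination of g and Ric(B). -/
theorem statement17
    {V : Type*} [AddCommGroup V] [Module ℝ V]
    (n : ℕ) (hn : 4 ≤ n)
    (g : LinearMap.BilinForm ℝ V)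
    (hgsymm : ∀ X Y, g X Y = g Y X)
    (hgnd : ∀ X : V, (∀ Y, g X Y = 0) → X = 0)
    (e : Module.Basis (Fin n) ℝ V) (ε : Fin n → ℝ)
    (hε : ∀ j, ε j = 1 ∨ ε j = -1)
    (he : ∀ j k, g (e j) (e k) = if j = k then ε j else 0)
    (B : V →ₗ[ℝ] V →ₗ[ℝ] V →ₗ[ℝ] V →ₗ[ℝ] ℝ)
    (Bf : V → V → V → V → ℝ) (hBf : Bf = fun X₁ X₂ X₃ X₄ => B X₁ X₂ X₃ X₄)
    (hB1 : ∀ X₁ X₂ X₃ X₄, Bf X₁ X₂ X₃ X₄ = - Bf X₂ X₁ X₃ X₄)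
    (hB2 : ∀ X₁ X₂ X₃ X₄, Bf X₁ X₂ X₃ X₄ = Bf X₃ X₄ X₁ X₂)
    (hB3 : ∀ X₁ X₂ X₃ X₄, Bf X₁ X₂ X₃ X₄ + Bf X₂ X₃ X₁ X₄ + Bf X₃ X₁ X₂ X₄ = 0)
    (Ric : V → V → ℝ) (hRic : Ric = ricci ε (⇑e) Bf)
    (κ : ℝ) (hκ : κ = scal ε (⇑e) Bf)
    (Wl : V → V → V → V → ℝ) (hWl : Wl = weyl (fun X Y => g X Y) ε (⇑e) Bf)
    (𝒟 : V →ₗ[ℝ] V) (h𝒟 : ∀ X Y, g (𝒟 X) Y = Ric X Y)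
    (hnl : ¬ ∃ a b : ℝ, ∀ X Y, Ric (𝒟 X) Y = a * g X Y + b * Ric X Y)
    (φ α₁ α₂ α₃ : ℝ)
    (hdec : ∀ X₁ X₂ X₃ X₄, Wl X₁ X₂ X₃ X₄
      = (φ / 2) * KN Ric Ric X₁ X₂ X₃ X₄
        + α₁ * KN (fun X Y => g X Y) (fun X Y => Ric (𝒟 X) Y) X₁ X₂ X₃ X₄
        + α₂ * KN (fun X Y => g X Y) Ric X₁ X₂ X₃ X₄
        + (α₃ / 2) * KN (fun X Y => g X Y) (fun X Y => g X Y) X₁ X₂ X₃ X₄) :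
    α₁ = φ / ((n : ℝ) - 2) ∧
    α₂ = -(κ * φ) / ((n : ℝ) - 2) ∧
    α₃ = ((κ ^ 2 - LinearMap.trace ℝ V (𝒟 ∘ₗ 𝒟)) * φ) / (((n : ℝ) - 2) * ((n : ℝ) - 1)) := by
  have hn4 : (4:ℝ) ≤ (n:ℝ) := by exact_mod_cast hn
  have hn2 : ((n:ℝ) - 2) ≠ 0 := by linarith
  have hn1 : ((n:ℝ) - 1) ≠ 0 := by linarith
  have hε2 : ∀ j, ε j * ε j = 1 := by
    intro j; rcases hε j with h | h <;> rw [h] <;> norm_num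
  -- expansion of a vector in the orthonormal basis
  have hexp : ∀ v : V, ∑ j, (ε j * g v (e j)) • e j = v := by
    intro v
    have h0 : ∀ k, g (∑ j, (ε j * g v (e j)) • e j - v) (e k) = 0 := by
      intro k
      have h1 : g (∑ j, (ε j * g v (e j)) • e j) (e k)
          = ∑ j, (ε j * g v (e j)) * g (e j) (e k) := by
        rw [map_sum]
        simp [LinearMap.sum_apply]
      rw [map_sub, LinearMap.sub_apply, h1]
      have h2 : ∑ j, (ε j * g v (e j)) * g (e j) (e k) = g v (e k) := by
        rw [Finset.sum_eq_single k]
        · rw [he k k, if_pos rfl]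
          linear_combination g v (e k) * hε2 k
        · intro j _ hj; rw [he j k, if_neg hj, mul_zero]
        · intro h; exact absurd (Finset.mem_univ k) h
      rw [h2]; ring
    have h0' : ∀ Y, g (∑ j, (ε j * g v (e j)) • e j - v) Y = 0 := by
      intro Y
      conv_lhs => rw [← Module.Basis.sum_repr e Y]
      rw [map_sum]
      simp only [map_smul, smul_eq_mul]
      exact Finset.sum_eq_zero fun k _ => by rw [h0 k, mul_zero]
    exact sub_eq_zero.mp (hgnd _ h0')
  -- Ric as a bilinear map
  set RicL : V →ₗ[ℝ] V →ₗ[ℝ] ℝ :=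
    ∑ j, ε j • (LinearMap.compr₂ (B (e j)) (LinearMap.applyₗ (e j))) with hRicLdef
  have hRicL : ∀ X Y, Ric X Y = RicL X Y := by
    intro X Y
    rw [hRic]
    simp [hRicLdef, ricci, hBf, LinearMap.sum_apply, LinearMap.smul_apply, smul_eq_mul,
      LinearMap.compr₂_apply, LinearMap.applyₗ, LinearMap.applyₗ']
    rfl
  -- contraction lemmas for bilinear forms
  have hA : ∀ (F : V →ₗ[ℝ] V →ₗ[ℝ] ℝ) (X Y : V),
      ∑ j, ε j * g Y (e j) * F X (e j) = F X Y := by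
    intro F X Y
    conv_rhs => rw [← hexp Y]
    rw [map_sum]
    exact Finset.sum_congr rfl fun j _ => by
      rw [map_smul, smul_eq_mul]; try ring
  have hB' : ∀ (F : V →ₗ[ℝ] V →ₗ[ℝ] ℝ) (X Y : V),
      ∑ j, ε j * g X (e j) * F (e j) Y = F X Y := by
    intro F X Y
    conv_rhs => rw [← hexp X]
    rw [map_sum, LinearMap.sum_apply]
    exact Finset.sum_congr rfl fun j _ => by
      rw [map_smul, LinearMap.smul_apply, smul_eq_mul]; try ring
  have hcard : ∑ _j : Fin n, (1:ℝ) = (n:ℝ) := by simp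
  -- contraction of KN g F
  have hcontr : ∀ (F : V →ₗ[ℝ] V →ₗ[ℝ] ℝ) (Ff : V → V → ℝ), (∀ a b, Ff a b = F a b) →
      ∀ X Y, ∑ j, ε j * KN (fun a b => g a b) Ff (e j) X Y (e j)
        = ((n:ℝ) - 2) * F X Y + (∑ j, ε j * F (e j) (e j)) * g X Y := by
    intro F Ff hFf X Y
    have step : ∀ j, ε j * KN (fun a b => g a b) Ff (e j) X Y (e j)
        = ε j * ε j * F X Y + ε j * F (e j) (e j) * g X Y
          - ε j * g Y (e j) * F X (e j) - ε j * g X (e j) * F (e j) Y := by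
      intro j
      simp only [KN, hFf]
      rw [he j j, if_pos rfl, hgsymm (e j) Y]
      ring
    rw [Finset.sum_congr rfl fun j _ => step j]
    rw [Finset.sum_sub_distrib, Finset.sum_sub_distrib, Finset.sum_add_distrib,
      hA F X Y, hB' F X Y]
    rw [← Finset.sum_mul, ← Finset.sum_mul]
    rw [Finset.sum_congr rfl fun j _ => hε2 j, hcard]
    ring
  -- D X expansion
  have hDX : ∀ X : V, ∑ j, (ε j * Ric X (e j)) • e j = 𝒟 X := by
    intro X
    rw [← hexp (𝒟 X)]
    exact Finset.sum_congr rfl fun j _ => by rw [h𝒟 X (e j)]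
  have hcomp : ∀ X Y, ∑ j, ε j * Ric X (e j) * Ric (e j) Y = Ric (𝒟 X) Y := by
    intro X Y
    rw [hRicL (𝒟 X) Y, ← hDX X, map_sum, LinearMap.sum_apply]
    exact Finset.sum_congr rfl fun j _ => by
      rw [map_smul, LinearMap.smul_apply, smul_eq_mul, ← hRicL]; try ring
  have hκ' : κ = ∑ j, ε j * Ric (e j) (e j) := by
    rw [hκ, hRic]; rfl
  -- contraction of KN Ric Ric
  have hcontrRR : ∀ X Y, ∑ j, ε j * KN Ric Ric (e j) X Y (e j)
      = 2 * κ * Ric X Y - 2 * Ric (𝒟 X) Y := by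
    intro X Y
    have step : ∀ j, ε j * KN Ric Ric (e j) X Y (e j)
        = 2 * (ε j * Ric (e j) (e j)) * Ric X Y
          - ε j * Ric (e j) Y * Ric X (e j) - ε j * Ric X (e j) * Ric (e j) Y := by
      intro j; simp only [KN]; ring
    rw [Finset.sum_congr rfl fun j _ => step j]
    rw [Finset.sum_sub_distrib, Finset.sum_sub_distrib]
    have e1 : ∑ j, 2 * (ε j * Ric (e j) (e j)) * Ric X Y = 2 * κ * Ric X Y := by
      rw [hκ', Finset.mul_sum, Finset.sum_mul]
    have e2 : ∑ j, ε j * Ric (e j) Y * Ric X (e j) = Ric (𝒟 X) Y := by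
      rw [← hcomp X Y]
      exact Finset.sum_congr rfl fun j _ => by ring
    
    have e3 : ∑ j, ε j * Ric X (e j) * Ric (e j) Y = Ric (𝒟 X) Y := hcomp X Y
    rw [e1, e2, e3]; ring
  -- diagonal of g sums to n
  have hgdiag : ∑ j, ε j * g (e j) (e j) = (n:ℝ) := by
    rw [← hcard]
    exact Finset.sum_congr rfl fun j _ => by rw [he j j, if_pos rfl, hε2 j]
  -- trace of 𝒟²
  have hrepr : ∀ (v : V) (k : Fin n), e.repr v k = ε k * g v (e k) := by
    intro v k
    conv_lhs => rw [← hexp v]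
    rw [map_sum]
    simp [Module.Basis.repr_self, Finsupp.single_apply]
  have htr : LinearMap.trace ℝ V (𝒟 ∘ₗ 𝒟) = ∑ j, ε j * Ric (𝒟 (e j)) (e j) := by
    rw [LinearMap.trace_eq_matrix_trace ℝ e, Matrix.trace]
    refine Finset.sum_congr rfl fun j _ => ?_
    rw [Matrix.diag_apply, LinearMap.toMatrix_apply, LinearMap.comp_apply, hrepr, h𝒟]
  -- contraction of B itself
  have hRB : ∀ X Y, ∑ j, ε j * Bf (e j) X Y (e j) = Ric X Y := by
    intro X Y; rw [hRic]; rfl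
  have s1 : ∑ j, ε j * RicL (e j) (e j) = κ := by
    rw [hκ']
    exact Finset.sum_congr rfl fun j _ => by rw [← hRicL]
  -- Ricci contraction of the Weyl tensor vanishes
  have hsum0 : ∀ X Y, ∑ j, ε j * Wl (e j) X Y (e j) = 0 := by
    intro X Y
    have hW : ∀ j, ε j * Wl (e j) X Y (e j)
        = ε j * Bf (e j) X Y (e j)
          - (1 / ((n:ℝ) - 2)) * (ε j * KN (fun a b => g a b) Ric (e j) X Y (e j))
          + (κ / (2 * ((n:ℝ) - 2) * ((n:ℝ) - 1)))
              * (ε j * KN (fun a b => g a b) (fun a b => g a b) (e j) X Y (e j)) := by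
      intro j
      rw [hWl]
      simp only [weyl, ← hRic, ← hκ]
      ring
    rw [Finset.sum_congr rfl fun j _ => hW j, Finset.sum_add_distrib, Finset.sum_sub_distrib,
      ← Finset.mul_sum, ← Finset.mul_sum, hRB,
      hcontr RicL Ric (fun a b => hRicL a b) X Y,
      hcontr g (fun a b => g a b) (fun a b => rfl) X Y, s1, hgdiag, ← hRicL]
    field_simp
    ring
  set T : ℝ := ∑ j, ε j * Ric (𝒟 (e j)) (e j) with hT
  -- the key pointwise linear relation
  have key : ∀ X Y, (α₁ * ((n:ℝ) - 2) - φ) * Ric (𝒟 X) Y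
      + (φ * κ + α₂ * ((n:ℝ) - 2)) * Ric X Y
      + (α₁ * T + α₂ * κ + α₃ * ((n:ℝ) - 1)) * g X Y = 0 := by
    intro X Y
    have h0 := hsum0 X Y
    have hW : ∀ j, ε j * Wl (e j) X Y (e j)
        = (φ/2) * (ε j * KN Ric Ric (e j) X Y (e j))
          + α₁ * (ε j * KN (fun a b => g a b) (fun a b => Ric (𝒟 a) b) (e j) X Y (e j))
          + α₂ * (ε j * KN (fun a b => g a b) Ric (e j) X Y (e j))
          + (α₃/2) * (ε j * KN (fun a b => g a b) (fun a b => g a b) (e j) X Y (e j)) := by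
      intro j; rw [hdec]; ring
    rw [Finset.sum_congr rfl fun j _ => hW j, Finset.sum_add_distrib, Finset.sum_add_distrib,
      Finset.sum_add_distrib, ← Finset.mul_sum, ← Finset.mul_sum, ← Finset.mul_sum,
      ← Finset.mul_sum, hcontrRR X Y,
      hcontr (RicL.comp 𝒟) (fun a b => Ric (𝒟 a) b) (fun a b => hRicL (𝒟 a) b) X Y,
      hcontr RicL Ric (fun a b => hRicL a b) X Y,
      hcontr g (fun a b => g a b) (fun a b => rfl) X Y, s1, hgdiag] at h0
    simp only [LinearMap.comp_apply, ← hRicL] at h0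
    rw [← hT] at h0
    linear_combination h0
  -- extract the coefficient relations
  have hc1 : α₁ * ((n:ℝ) - 2) - φ = 0 := by
    by_contra hc
    refine hnl ⟨-(α₁ * T + α₂ * κ + α₃ * ((n:ℝ) - 1)) / (α₁ * ((n:ℝ) - 2) - φ),
      -(φ * κ + α₂ * ((n:ℝ) - 2)) / (α₁ * ((n:ℝ) - 2) - φ), fun X Y => ?_⟩
    have h := key X Y
    field_simp
    linarith [h]
  have keyred : ∀ X Y, (φ * κ + α₂ * ((n:ℝ) - 2)) * Ric X Y
      + (α₁ * T + α₂ * κ + α₃ * ((n:ℝ) - 1)) * g X Y = 0 := by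
    intro X Y
    have h := key X Y
    linear_combination h - Ric (𝒟 X) Y * hc1
  have hc2 : φ * κ + α₂ * ((n:ℝ) - 2) = 0 := by
    by_contra hc
    refine hnl ⟨0, -(α₁ * T + α₂ * κ + α₃ * ((n:ℝ) - 1)) / (φ * κ + α₂ * ((n:ℝ) - 2)),
      fun X Y => ?_⟩
    have h := keyred (𝒟 X) Y
    rw [h𝒟 X Y] at h
    rw [zero_mul, zero_add, div_mul_eq_mul_div, eq_div_iff hc]
    linear_combination h
  have hc3 : α₁ * T + α₂ * κ + α₃ * ((n:ℝ) - 1) = 0 := by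
    have j0 : Fin n := ⟨0, by omega⟩
    have h := keyred (e j0) (e j0)
    rw [he j0 j0, if_pos rfl] at h
    rcases hε j0 with h1 | h1 <;> rw [h1] at h
    · linear_combination h - Ric (e j0) (e j0) * hc2
    · linear_combination -h + Ric (e j0) (e j0) * hc2
  have hTr : LinearMap.trace ℝ V (𝒟 ∘ₗ 𝒟) = T := htr
  refine ⟨?_, ?_, ?_⟩
  · field_simp
    linarith [hc1]
  · field_simp
    linarith [hc2]
  · rw [hTr]
    field_simp
    linear_combination ((n:ℝ) - 2) * hc3 - T * hc1 - κ * hc2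




end OVAff
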